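/- Let L be a regular tree language and A_can its canonical bottom-up automaton. Then for every term t ∈ T(F): t⁻¹L = ⋃ { t_q⁻¹L : q a state of A_can with t →*_{A_can} q }. -/

import Mathlib

/-- Terms over a ranked alphabet `F` with arity function `arity`. -/
inductive Term (F : Type) (arity : F → ℕ) : Type where
  | node (f : F) (children : Fin (arity f) → Term F arity) : Term F arity

/-- Contexts: terms with exactly one occurrence of the hole `◇`. -/
inductive Ctx (F : Type) (arity : F → ℕ) : Type where
  | hole : Ctx F arity
  | node (f : F) (i : Fin (arity f)) (c : Ctx F arity)
      (sib : (j : Fin (arity f)) → j ≠ i → Term F arity) : Ctx F arity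

/-- `c.fill t` replaces the hole of `c` by the term `t`. -/
def Ctx.fill {F : Type} {arity : F → ℕ} : Ctx F arity → Term F arity → Term F arity
  | .hole, t => t
  | .node f i c sib, t => .node f (fun j => if h : j = i then c.fill t else sib j h)

/-- Bottom-up residual of the tree language `L` w.r.t. the term `t`:
the set of contexts `c` with `c[t] ∈ L`. -/
def bres {F : Type} {arity : F → ℕ} (L : Set (Term F arity)) (t : Term F arity) :
    Set (Ctx F arity) := {c | c.fill t ∈ L}

/-- Bottom-up finite tree automaton with state type `Q`:
final states and a set of rules `f(q₁,…,qₙ) → q`. -/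
structure BUTA (F : Type) (arity : F → ℕ) (Q : Type) where
  final : Set Q
  rules : (f : F) → (Fin (arity f) → Q) → Q → Prop

/-- Reachability `t →*_A q`. -/
inductive BUTA.Reach {F Q : Type} {arity : F → ℕ} (A : BUTA F arity Q) :
    Term F arity → Q → Prop
  | node {f : F} {ch : Fin (arity f) → Term F arity} {qs : Fin (arity f) → Q} {q : Q} :
      A.rules f qs q → (∀ i, A.Reach (ch i) (qs i)) → A.Reach (.node f ch) q

/-- Language recognized by a bottom-up tree automaton. -/
def BUTA.lang {F Q : Type} {arity : F → ℕ} (A : BUTA F arity Q) : Set (Term F arity) :=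
  {t | ∃ q ∈ A.final, A.Reach t q}

/-- `A.CReach q0 c q` : putting state `q0` in the hole of `c`, the automaton can reach `q`
at the root (extending `→*_A` to terms over `F ∪ Q` by `q →*_A q`). -/
inductive BUTA.CReach {F Q : Type} {arity : F → ℕ} (A : BUTA F arity Q) (q0 : Q) :
    Ctx F arity → Q → Prop
  | hole : A.CReach q0 .hole q0
  | node {f : F} {i : Fin (arity f)} {c : Ctx F arity}
      {sib : (j : Fin (arity f)) → j ≠ i → Term F arity}
      {qs : Fin (arity f) → Q} {q : Q} :
      A.rules f qs q → A.CReach q0 c (qs i) →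
      (∀ j (h : j ≠ i), A.Reach (sib j h) (qs j)) →
      A.CReach q0 (.node f i c sib) q

/-- State language `C_q`: the set of contexts accepted by the state `q`. -/
def BUTA.stateLang {F Q : Type} {arity : F → ℕ} (A : BUTA F arity Q) (q : Q) :
    Set (Ctx F arity) := {c | ∃ qf ∈ A.final, A.CReach q c qf}

/-- A bottom-up automaton is deterministic iff no two rules share a left-hand side. -/
def BUTA.Deterministic {F Q : Type} {arity : F → ℕ} (A : BUTA F arity Q) : Prop :=
  ∀ (f : F) (qs : Fin (arity f) → Q) (q q' : Q), A.rules f qs q → A.rules f qs q' → q = q'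

/-- Bottom-up residual finite tree automaton: each state language is a residual of `L(A)`. -/
def IsRFTA {F Q : Type} {arity : F → ℕ} (A : BUTA F arity Q) : Prop :=
  ∀ q : Q, ∃ t : Term F arity, A.stateLang q = bres A.lang t

/-- A bottom-up residual is composite iff it is the union of the bottom-up residuals
of `L` that it strictly contains. -/
def IsCompositeRes {F : Type} {arity : F → ℕ} (L : Set (Term F arity))
    (t : Term F arity) : Prop :=
  bres L t = ⋃ t' ∈ {t' : Term F arity | bres L t' ⊂ bres L t}, bres L t'

/-- A bottom-up residual is prime iff it is not composite. -/
def IsPrimeRes {F : Type} {arity : F → ℕ} (L : Set (Term F arity))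
    (t : Term F arity) : Prop := ¬ IsCompositeRes L t

/-- The canonical bottom-up automaton of `L`, given a family `tq` of representative terms
(one per prime bottom-up residual of `L`): final states are the `q` with `◇ ∈ t_q⁻¹L`,
and the rules are the `f(q₁,…,qₙ) → q` with `t_q⁻¹L ⊆ f(t_{q₁},…,t_{qₙ})⁻¹L`. -/
def canonBU {F : Type} {arity : F → ℕ} (L : Set (Term F arity)) {Q : Type}
    (tq : Q → Term F arity) : BUTA F arity Q where
  final := {q | Ctx.hole ∈ bres L (tq q)}
  rules f qs q := bres L (tq q) ⊆ bres L (.node f (fun i => tq (qs i)))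

namespace CanonBUAux

variable {F Q : Type} {arity : F → ℕ}

/-- Append a node at the hole of a context. -/
def pushCtx : Ctx F arity → (f : F) → (i : Fin (arity f)) →
    ((j : Fin (arity f)) → j ≠ i → Term F arity) → Ctx F arity
  | .hole, f, i, sib => .node f i .hole sib
  | .node g k c s, f, i, sib => .node g k (pushCtx c f i sib) s

lemma fill_pushCtx (c : Ctx F arity) (f : F) (i : Fin (arity f))
    (sib : (j : Fin (arity f)) → j ≠ i → Term F arity) (t : Term F arity) :
    (pushCtx c f i sib).fill t
      = c.fill (.node f (fun j => if h : j = i then t else sib j h)) := by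
  induction c with
  | hole => rfl
  | node g k c s ih => simp only [pushCtx, Ctx.fill, ih]

lemma mem_bres_node (L : Set (Term F arity)) (f : F) (ch : Fin (arity f) → Term F arity)
    (i : Fin (arity f)) (c : Ctx F arity) :
    c ∈ bres L (.node f ch) ↔ pushCtx c f i (fun j _ => ch j) ∈ bres L (ch i) := by
  simp only [bres, Set.mem_setOf_eq, fill_pushCtx]
  have h : (Term.node f (fun j => if h : j = i then ch i else ch j) : Term F arity)
      = .node f ch := by
    congr 1; funext j; split
    · next h => rw [h]
    · rfl
  rw [h]

lemma replace_one (L : Set (Term F arity)) (f : F) (ch : Fin (arity f) → Term F arity)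
    (i : Fin (arity f)) (v : Term F arity) (h : bres L (ch i) ⊆ bres L v)
    {c : Ctx F arity} (hc : c ∈ bres L (.node f ch)) :
    c ∈ bres L (.node f (Function.update ch i v)) := by
  rw [mem_bres_node L f ch i] at hc
  rw [mem_bres_node L f _ i]
  have hsib : (fun j (_ : j ≠ i) => Function.update ch i v j)
      = (fun j (_ : j ≠ i) => ch j) := by
    funext j hj; exact Function.update_of_ne hj _ _
  rw [hsib, Function.update_self]
  exact h hc

lemma mono_node (L : Set (Term F arity)) (f : F) {u v : Fin (arity f) → Term F arity}
    (h : ∀ i, bres L (u i) ⊆ bres L (v i)) :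
    bres L (.node f u) ⊆ bres L (.node f v) := by
  have key : ∀ k : ℕ, bres L (.node f u) ⊆
      bres L (.node f (fun j => if j.val < k then v j else u j)) := by
    intro k
    induction k with
    | zero => simp
    | succ k ih =>
      by_cases hk : k < arity f
      · intro c hc
        have step := replace_one L f (fun j => if j.val < k then v j else u j)
          ⟨k, hk⟩ (v ⟨k, hk⟩) (by simpa using h ⟨k, hk⟩) (ih hc)
        have heq : Function.update (fun j : Fin (arity f) => if j.val < k then v j else u j)
            ⟨k, hk⟩ (v ⟨k, hk⟩) = fun j => if j.val < k + 1 then v j else u j := by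
          funext j
          by_cases hj : j = ⟨k, hk⟩
          · subst hj; rw [Function.update_self, if_pos (Nat.lt_succ_self k)]
          · rw [Function.update_of_ne hj]
            have hjk : j.val ≠ k := fun hh => hj (Fin.ext hh)
            by_cases h2 : j.val < k
            · rw [if_pos h2, if_pos (by omega)]
            · rw [if_neg h2, if_neg (by omega)]
        rwa [heq] at step
      · have heq : (fun j : Fin (arity f) => if j.val < k + 1 then v j else u j)
            = fun j => if j.val < k then v j else u j := by
          funext j; have := j.isLt
          rw [if_pos (by omega), if_pos (by omega)]
        rw [heq]; exact ih
  have := key (arity f)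
  have heq : (fun j : Fin (arity f) => if j.val < arity f then v j else u j) = v := by
    funext j; rw [if_pos j.isLt]
  rwa [heq] at this

lemma reach_subset (L : Set (Term F arity)) (tq : Q → Term F arity) :
    ∀ {t : Term F arity} {q : Q}, (canonBU L tq).Reach t q → bres L (tq q) ⊆ bres L t := by
  intro t q h
  induction h with
  | node hrule hch ih =>
    exact Set.Subset.trans hrule (mono_node L _ fun i => ih i)

lemma reach_fill {Q' : Type} (A : BUTA F arity Q') :
    ∀ (c : Ctx F arity) (t : Term F arity) (qf : Q'),
    A.Reach (c.fill t) qf ↔ ∃ q, A.Reach t q ∧ A.CReach q c qf := by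
  intro c
  induction c with
  | hole =>
    intro t qf
    constructor
    · exact fun h => ⟨qf, h, .hole⟩
    · rintro ⟨q, hq, hc⟩; cases hc; exact hq
  | node f i c sib ih =>
    intro t qf
    constructor
    · intro h
      cases h with
      | @node _ _ qs _ hrule hch =>
        have hi : A.Reach (c.fill t) (qs i) := by simpa using hch i
        obtain ⟨q, hq, hcr⟩ := (ih t (qs i)).1 hi
        refine ⟨q, hq, .node hrule hcr fun j hj => ?_⟩
        simpa [hj] using hch j
    · rintro ⟨q, hq, hcr⟩
      cases hcr with
      | @node _ _ _ _ qs _ hrule hcr' hsib =>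
        refine BUTA.Reach.node hrule fun j => ?_
        by_cases hj : j = i
        · subst hj
          simpa using (ih t _).2 ⟨q, hq, hcr'⟩
        · simpa [hj] using hsib j hj

lemma bres_lang {Q' : Type} (A : BUTA F arity Q') (t : Term F arity) :
    bres A.lang t = {c | ∃ qf ∈ A.final, ∃ q, A.Reach t q ∧ A.CReach q c qf} := by
  ext c
  simp only [bres, BUTA.lang, Set.mem_setOf_eq, reach_fill]

lemma finite_bres_range {Q' : Type} [Finite Q'] (A : BUTA F arity Q') :
    (Set.range (fun t => bres A.lang t)).Finite := by
  have hsub : Set.range (fun t => bres A.lang t) ⊆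
      Set.range (fun X : Set Q' =>
        {c : Ctx F arity | ∃ qf ∈ A.final, ∃ q ∈ X, A.CReach q c qf}) := by
    rintro S ⟨t, rfl⟩
    refine ⟨{q | A.Reach t q}, ?_⟩
    ext c
    simp only [bres_lang, Set.mem_setOf_eq]
  exact (Set.finite_range _).subset hsub

lemma exists_prime_mem (L : Set (Term F arity))
    (hfin : (Set.range (fun t => bres L t)).Finite)
    {c : Ctx F arity} {s : Term F arity} (hc : c ∈ bres L s) :
    ∃ t', IsPrimeRes L t' ∧ c ∈ bres L t' ∧ bres L t' ⊆ bres L s := by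
  set T : Set (Set (Ctx F arity)) :=
    {S | (∃ t', bres L t' = S) ∧ c ∈ S ∧ S ⊆ bres L s} with hT
  have hTfin : T.Finite := hfin.subset (by rintro S ⟨⟨t', rfl⟩, -⟩; exact ⟨t', rfl⟩)
  have hTne : T.Nonempty := ⟨bres L s, ⟨s, rfl⟩, hc, subset_rfl⟩
  obtain ⟨M, hM, hmin'⟩ := hTfin.exists_minimalFor id T hTne
  have hmin : ∀ a' ∈ T, a' ≤ M → M = a' := fun a ha hle => le_antisymm (hmin' ha hle) hle
  obtain ⟨⟨t', ht'⟩, hcM, hMs⟩ := hM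
  refine ⟨t', ?_, ht' ▸ hcM, ht' ▸ hMs⟩
  intro hcomp
  have hc' : c ∈ bres L t' := ht' ▸ hcM
  rw [hcomp] at hc'
  simp only [Set.mem_iUnion, Set.mem_setOf_eq, exists_prop] at hc'
  obtain ⟨t'', hss, hct''⟩ := hc'
  have hmem : bres L t'' ∈ T :=
    ⟨⟨t'', rfl⟩, hct'', (hss.subset).trans (ht' ▸ hMs)⟩
  have heqM : bres L t'' = M :=
    (hmin (bres L t'') hmem (le_of_le_of_eq hss.subset ht')).symm
  exact hss.ne (heqM.trans ht'.symm)

lemma bres_subset_reach (L : Set (Term F arity))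
    (hfin : (Set.range fun t => bres L t).Finite)
    (tq : Q → Term F arity)
    (hsurj : ∀ t : Term F arity, IsPrimeRes L t → ∃ q, bres L (tq q) = bres L t) :
    ∀ (t : Term F arity) (c : Ctx F arity), c ∈ bres L t →
      ∃ q, (canonBU L tq).Reach t q ∧ c ∈ bres L (tq q) := by
  intro t
  induction t with
  | node f ch ih =>
    intro c hc
    obtain ⟨t0, hp0, -, -⟩ := exists_prime_mem L hfin hc
    obtain ⟨q0, -⟩ := hsurj t0 hp0
    have key : ∀ k : ℕ, ∃ qs : Fin (arity f) → Q,
        (∀ i : Fin (arity f), i.val < k → (canonBU L tq).Reach (ch i) (qs i)) ∧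
        c ∈ bres L (.node f fun j => if j.val < k then tq (qs j) else ch j) := by
      intro k
      induction k with
      | zero =>
        refine ⟨fun _ => q0, fun i h => absurd h (by omega), ?_⟩
        have heq : (fun j : Fin (arity f) =>
            if j.val < 0 then tq q0 else ch j) = ch := by
          funext j; rw [if_neg (by omega)]
        rwa [heq]
      | succ k ihk =>
        obtain ⟨qs, h1, h2⟩ := ihk
        by_cases hk : k < arity f
        · have hpush := (mem_bres_node L f _ ⟨k, hk⟩ c).1 h2
          have hchi : (if (⟨k, hk⟩ : Fin (arity f)).val < k then tq (qs ⟨k, hk⟩)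
              else ch ⟨k, hk⟩) = ch ⟨k, hk⟩ := by rw [if_neg (lt_irrefl k)]
          rw [hchi] at hpush
          obtain ⟨q', hr', hm'⟩ := ih ⟨k, hk⟩ _ hpush
          refine ⟨Function.update qs ⟨k, hk⟩ q', ?_, ?_⟩
          · intro j hj
            by_cases hji : j = ⟨k, hk⟩
            · subst hji; rw [Function.update_self]; exact hr'
            · rw [Function.update_of_ne hji]
              exact h1 j (by
                have : j.val ≠ k := fun hh => hji (Fin.ext hh)
                omega)
          · have hyb : (fun j : Fin (arity f) =>
                if j.val < k + 1 then tq (Function.update qs ⟨k, hk⟩ q' j) else ch j)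
                = Function.update (fun j => if j.val < k then tq (qs j) else ch j)
                  ⟨k, hk⟩ (tq q') := by
              funext j
              by_cases hji : j = ⟨k, hk⟩
              · subst hji
                rw [Function.update_self, Function.update_self,
                  if_pos (Nat.lt_succ_self k)]
              · rw [Function.update_of_ne hji, Function.update_of_ne hji]
                have hjk : j.val ≠ k := fun hh => hji (Fin.ext hh)
                by_cases h3 : j.val < k
                · rw [if_pos (by omega), if_pos h3]
                · rw [if_neg (by omega), if_neg h3]
            rw [hyb, mem_bres_node L f _ ⟨k, hk⟩]
            have hsib : (fun j (_ : j ≠ (⟨k, hk⟩ : Fin (arity f))) =>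
                Function.update (fun j => if j.val < k then tq (qs j) else ch j)
                  ⟨k, hk⟩ (tq q') j)
                = fun j (_ : j ≠ (⟨k, hk⟩ : Fin (arity f))) =>
                    (if j.val < k then tq (qs j) else ch j) := by
              funext j hj; exact Function.update_of_ne hj _ _
            rw [hsib, Function.update_self]
            exact hm'
        · refine ⟨qs, fun j hj => h1 j (by have := j.isLt; omega), ?_⟩
          have heq : (fun j : Fin (arity f) => if j.val < k + 1 then tq (qs j) else ch j)
              = fun j => if j.val < k then tq (qs j) else ch j := by
            funext j; have := j.isLt
            rw [if_pos (by omega), if_pos (by omega)]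
          rwa [heq]
    obtain ⟨qs, h1, h2⟩ := key (arity f)
    have heq : (fun j : Fin (arity f) => if j.val < arity f then tq (qs j) else ch j)
        = fun j => tq (qs j) := by
      funext j; rw [if_pos j.isLt]
    rw [heq] at h2
    obtain ⟨t', hp, hct', hsub⟩ := exists_prime_mem L hfin h2
    obtain ⟨q, hq⟩ := hsurj t' hp
    refine ⟨q, .node (show bres L (tq q) ⊆ bres L (.node f fun i => tq (qs i)) from
      hq ▸ hsub) (fun i => h1 i i.isLt), hq ▸ hct'⟩

end CanonBUAux

/-- For a regular tree language `L` and its canonical bottom-up automaton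
`A_can`, for every term `t`: `t⁻¹L = ⋃ { t_q⁻¹L : q with t →*_{A_can} q }`. -/
theorem canonBU_residual_eq_iUnion {F Q : Type} [Fintype F] [Fintype Q] {arity : F → ℕ}
    (_hconst : ∃ a : F, arity a = 0) (L : Set (Term F arity))
    (hreg : ∃ (Q' : Type) (_ : Fintype Q') (A : BUTA F arity Q'), A.lang = L)
    (tq : Q → Term F arity)
    (hprime : ∀ q, IsPrimeRes L (tq q))
    (hinj : ∀ q q', bres L (tq q) = bres L (tq q') → q = q')
    (hsurj : ∀ t : Term F arity, IsPrimeRes L t → ∃ q, bres L (tq q) = bres L t)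
    (t : Term F arity) :
    bres L t = ⋃ q ∈ {q : Q | (canonBU L tq).Reach t q}, bres L (tq q) := by
  obtain ⟨Q', hfQ', A, hA⟩ := hreg
  have : Finite Q' := @Finite.of_fintype _ hfQ'
  have hfin : (Set.range fun t => bres L t).Finite := by
    rw [← hA]; exact CanonBUAux.finite_bres_range A
  ext c
  simp only [Set.mem_iUnion, Set.mem_setOf_eq, exists_prop]
  constructor
  · intro hc
    exact CanonBUAux.bres_subset_reach L hfin tq hsurj t c hc
  · rintro ⟨q, hr, hm⟩
    exact CanonBUAux.reach_subset L tq hr hm
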